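/- Let e, f ∈ ℝ³ with ‖e‖ ≤ 1 and ‖f‖ ≤ 1, and define qubit effects E = ½(1 + e · σ) and F = ½(1 + f · σ) on ℂ². Then each of the four operators E ⊓ F, E ⊓ (1−F), (1−E) ⊓ F, and (1−E) ⊓ (1−F) has smallest eigenvalue ¼(2 − ‖e − f‖ − ‖e + f‖); in particular, all four operators are positive if and only if ‖e + f‖ + ‖e − f‖ ≤ 2. -/

import Mathlib

open Matrix ComplexOrder

/-- `e · σ = e₁σ_x + e₂σ_y + e₃σ_z` for `e ∈ ℝ³` and the Pauli matrices. -/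
noncomputable def dotSigma (e : EuclideanSpace ℝ (Fin 3)) : Matrix (Fin 2) (Fin 2) ℂ :=
  (e 0 : ℂ) • !![0, 1; 1, 0] + (e 1 : ℂ) • !![0, -Complex.I; Complex.I, 0] +
    (e 2 : ℂ) • !![1, 0; 0, -1]

/-- The absolute value of a (Hermitian) matrix: the positive semidefinite square root of
`Aᴴ * A` (which equals `A²` for Hermitian `A`). -/
noncomputable def matAbs (A : Matrix (Fin 2) (Fin 2) ℂ) : Matrix (Fin 2) (Fin 2) ℂ :=
  ((Matrix.posSemidef_conjTranspose_mul_self A).1.eigenvectorUnitary :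
      Matrix (Fin 2) (Fin 2) ℂ) *
    diagonal (((↑) : ℝ → ℂ) ∘ (√·) ∘ (Matrix.posSemidef_conjTranspose_mul_self A).1.eigenvalues) *
    (star (Matrix.posSemidef_conjTranspose_mul_self A).1.eigenvectorUnitary :
      Matrix (Fin 2) (Fin 2) ℂ)

/-- The generalized infimum E ⊓ F = ½(E + F - |E - F|). -/
noncomputable def matGinf (E F : Matrix (Fin 2) (Fin 2) ℂ) : Matrix (Fin 2) (Fin 2) ℂ :=
  (2 : ℂ)⁻¹ • (E + F - matAbs (E - F))

lemma dotSigma_eq (g : EuclideanSpace ℝ (Fin 3)) :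
    dotSigma g = !![(g 2 : ℂ), g 0 - g 1 * Complex.I; g 0 + g 1 * Complex.I, -(g 2 : ℂ)] := by
  unfold dotSigma; ext i j
  fin_cases i <;> fin_cases j <;> simp <;> ring

lemma dotSigma_herm (g : EuclideanSpace ℝ (Fin 3)) : (dotSigma g).IsHermitian := by
  rw [dotSigma_eq]; unfold Matrix.IsHermitian; ext i j
  fin_cases i <;> fin_cases j <;> simp [Matrix.conjTranspose_apply, Complex.ext_iff]

lemma dotSigma_add (g h : EuclideanSpace ℝ (Fin 3)) :
    dotSigma (g + h) = dotSigma g + dotSigma h := by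
  simp only [dotSigma, PiLp.add_apply]
  push_cast
  module

lemma dotSigma_smul (a : ℝ) (g : EuclideanSpace ℝ (Fin 3)) :
    dotSigma (a • g) = (a : ℂ) • dotSigma g := by
  simp only [dotSigma, PiLp.smul_apply, smul_eq_mul]
  push_cast
  module

lemma dotSigma_neg (g : EuclideanSpace ℝ (Fin 3)) : dotSigma (-g) = -dotSigma g := by
  have := dotSigma_smul (-1) g
  simpa using this

lemma dotSigma_sub (g h : EuclideanSpace ℝ (Fin 3)) :
    dotSigma (g - h) = dotSigma g - dotSigma h := by
  rw [sub_eq_add_neg, dotSigma_add, dotSigma_neg, sub_eq_add_neg]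

lemma norm_sq_eq' (g : EuclideanSpace ℝ (Fin 3)) : ‖g‖ ^ 2 = g 0 ^ 2 + g 1 ^ 2 + g 2 ^ 2 := by
  rw [EuclideanSpace.norm_eq, Real.sq_sqrt (by positivity)]
  simp [Fin.sum_univ_three, sq_abs]

lemma dotSigma_sq (g : EuclideanSpace ℝ (Fin 3)) :
    dotSigma g * dotSigma g = ((‖g‖ ^ 2 : ℝ) : ℂ) • 1 := by
  rw [dotSigma_eq, norm_sq_eq']
  ext i j
  fin_cases i <;> fin_cases j <;>
    simp [Matrix.mul_apply, Fin.sum_univ_two, Matrix.one_apply] <;>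
    ring_nf <;> simp [Complex.I_sq] <;> ring_nf

lemma key (c : ℝ) (g : EuclideanSpace ℝ (Fin 3)) :
    ∃ h : ((c : ℂ) • 1 + dotSigma g).IsHermitian,
      (⨅ i, h.eigenvalues i = c - ‖g‖) ∧
      (((c : ℂ) • 1 + dotSigma g).PosSemidef ↔ ‖g‖ ≤ c) := by
  set M : Matrix (Fin 2) (Fin 2) ℂ := (c : ℂ) • 1 + dotSigma g with hM
  have h : M.IsHermitian := by
    apply Matrix.IsHermitian.add _ (dotSigma_herm g)
    simp [Matrix.IsHermitian, Matrix.conjTranspose_smul, Complex.star_def, Complex.conj_ofReal]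
  refine ⟨h, ?_⟩
  set r := ‖g‖ with hr
  have hr0 : 0 ≤ r := norm_nonneg g
  have htr : M.trace = 2 * (c : ℂ) := by
    rw [hM, dotSigma_eq]
    simp [Matrix.trace_fin_two]
    ring
  have htr' : M.trace = ((h.eigenvalues 0 : ℂ) + (h.eigenvalues 1 : ℂ)) := by
    conv_lhs => rw [h.spectral_theorem]
    rw [Unitary.conjStarAlgAut_apply, Matrix.trace_mul_cycle]
    rw [show (star (h.eigenvectorUnitary : Matrix (Fin 2) (Fin 2) ℂ)) *
      (h.eigenvectorUnitary : Matrix (Fin 2) (Fin 2) ℂ) = 1 from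
      (Matrix.mem_unitaryGroup_iff').mp h.eigenvectorUnitary.2]
    simp [Matrix.trace_fin_two]
  have hdet : M.det = ((c ^ 2 - r ^ 2 : ℝ) : ℂ) := by
    rw [hM, dotSigma_eq, hr, norm_sq_eq']
    simp [Matrix.det_fin_two, Matrix.one_apply]
    ring_nf
    simp [Complex.I_sq, Complex.ext_iff]
    constructor <;> ring_nf
  have hdet' : M.det = (h.eigenvalues 0 : ℂ) * (h.eigenvalues 1 : ℂ) := by
    rw [h.det_eq_prod_eigenvalues]; simp [Fin.prod_univ_two]
  set a := h.eigenvalues 0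
  set b := h.eigenvalues 1
  have hsum : a + b = 2 * c := by
    have := htr'.symm.trans htr
    exact_mod_cast this
  have hprod : a * b = c ^ 2 - r ^ 2 := by
    have := hdet'.symm.trans hdet
    exact_mod_cast this
  have ha : a = c - r ∨ a = c + r := by
    have h0 : (a - (c - r)) * (a - (c + r)) = 0 := by linear_combination a * hsum - hprod
    rcases mul_eq_zero.mp h0 with h1 | h1
    · left; linarith
    · right; linarith
  have hmin : min a b = c - r := by
    rcases ha with h1 | h1 <;>
      [ (have hb : b = c + r := by linarith);
        (have hb : b = c - r := by linarith) ] <;>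
      rw [h1, hb] <;> [exact min_eq_left (by linarith); exact min_eq_right (by linarith)]
  have hinf : ⨅ i, h.eigenvalues i = min a b := by
    apply le_antisymm
    · exact le_min (ciInf_le (Set.Finite.bddBelow (Set.finite_range _)) 0)
        (ciInf_le (Set.Finite.bddBelow (Set.finite_range _)) 1)
    · apply le_ciInf
      intro i
      fin_cases i
      exacts [min_le_left _ _, min_le_right _ _]
  refine ⟨hinf.trans hmin, ?_⟩
  constructor
  · intro hpsd
    have h0 := hpsd.eigenvalues_nonneg 0
    have h1 := hpsd.eigenvalues_nonneg 1
    have : (0:ℝ) ≤ min a b := le_min h0 h1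
    rw [hmin] at this; linarith
  · intro hle
    apply h.posSemidef_iff_eigenvalues_nonneg.mpr; simp only [Pi.le_def, Pi.zero_apply]
    intro i
    have : min a b ≤ h.eigenvalues i := by
      fin_cases i
      exacts [min_le_left _ _, min_le_right _ _]
    rw [hmin] at this; linarith

lemma psd_scalar (r : ℝ) (hr : 0 ≤ r) :
    Matrix.PosSemidef ((r : ℂ) • (1 : Matrix (Fin 2) (Fin 2) ℂ)) := by
  rw [Matrix.smul_one_eq_diagonal]
  exact Matrix.posSemidef_diagonal_iff.mpr fun i => by positivity

lemma matAbs_of_sq (A : Matrix (Fin 2) (Fin 2) ℂ) (t s : ℝ) (ht : 0 ≤ t) (hst : s = t ^ 2)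
    (hAA : Aᴴ * A = (s : ℂ) • 1) : matAbs A = (t : ℂ) • 1 := by
  unfold matAbs
  set hP := (Matrix.posSemidef_conjTranspose_mul_self A).1 with hPdef
  set U : Matrix (Fin 2) (Fin 2) ℂ := (hP.eigenvectorUnitary : Matrix (Fin 2) (Fin 2) ℂ) with hUdef
  set D := diagonal (((↑) : ℝ → ℂ) ∘ hP.eigenvalues) with hDdef
  have hU : star U * U = 1 := (Matrix.mem_unitaryGroup_iff').mp hP.eigenvectorUnitary.2
  have hU' : U * star U = 1 := (Matrix.mem_unitaryGroup_iff).mp hP.eigenvectorUnitary.2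
  have hs' : Aᴴ * A = U * D * star U := hP.spectral_theorem
  have e1 : star U * (U * D * star U) * U = D := by
    simp only [Matrix.mul_assoc]
    rw [hU, Matrix.mul_one, ← Matrix.mul_assoc, hU, Matrix.one_mul]
  have hD : D = (s : ℂ) • 1 := by
    calc D = star U * (U * D * star U) * U := e1.symm
      _ = star U * (Aᴴ * A) * U := by rw [← hs']
      _ = (s : ℂ) • 1 := by
        rw [hAA]; simp only [Matrix.mul_smul, Matrix.smul_mul, Matrix.mul_one, hU]
  have hev : hP.eigenvalues = fun _ => s := by
    funext i
    have := congrFun (congrFun hD i) i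
    simp only [hDdef, diagonal_apply_eq, Function.comp_apply, Matrix.smul_apply,
      Matrix.one_apply_eq, smul_eq_mul, mul_one] at this
    exact_mod_cast this
  have hsq : √s = t := by rw [hst]; exact Real.sqrt_sq ht
  have hdiag : diagonal (((↑) : ℝ → ℂ) ∘ (√·) ∘ fun _ : Fin 2 => s) = (t : ℂ) • 1 := by
    rw [smul_one_eq_diagonal]; congr 1; funext i; simp [hsq]
  rw [hev, hdiag]
  simp only [Matrix.mul_smul, Matrix.smul_mul, Matrix.mul_one, hU']

lemma matAbs_half_dotSigma (d : EuclideanSpace ℝ (Fin 3)) :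
    matAbs ((2 : ℂ)⁻¹ • dotSigma d) = ((‖d‖ / 2 : ℝ) : ℂ) • 1 := by
  apply matAbs_of_sq _ _ _ (by positivity) rfl
  have hH : ((2 : ℂ)⁻¹ • dotSigma d)ᴴ = (2 : ℂ)⁻¹ • dotSigma d := by
    rw [Matrix.conjTranspose_smul, (dotSigma_herm d)]
    norm_num
  rw [hH]
  simp only [Matrix.smul_mul, Matrix.mul_smul, smul_smul, dotSigma_sq]
  congr 1
  push_cast
  ring

lemma ginf_form (e f : EuclideanSpace ℝ (Fin 3)) :
    matGinf ((2 : ℂ)⁻¹ • (1 + dotSigma e)) ((2 : ℂ)⁻¹ • (1 + dotSigma f)) =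
      (((2 - ‖e - f‖) / 4 : ℝ) : ℂ) • 1 + dotSigma ((4 : ℝ)⁻¹ • (e + f)) := by
  have hsub : (2 : ℂ)⁻¹ • (1 + dotSigma e) - (2 : ℂ)⁻¹ • (1 + dotSigma f)
      = (2 : ℂ)⁻¹ • dotSigma (e - f) := by
    rw [dotSigma_sub]; module
  unfold matGinf
  rw [hsub, matAbs_half_dotSigma, dotSigma_smul, dotSigma_add]
  push_cast
  module

lemma master (e f : EuclideanSpace ℝ (Fin 3)) :
    ∃ h : (matGinf ((2 : ℂ)⁻¹ • (1 + dotSigma e)) ((2 : ℂ)⁻¹ • (1 + dotSigma f))).IsHermitian,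
      (⨅ i, h.eigenvalues i = (2 - ‖e - f‖ - ‖e + f‖) / 4) ∧
      ((matGinf ((2 : ℂ)⁻¹ • (1 + dotSigma e)) ((2 : ℂ)⁻¹ • (1 + dotSigma f))).PosSemidef ↔
        ‖e + f‖ + ‖e - f‖ ≤ 2) := by
  rw [ginf_form]
  obtain ⟨h, h1, h2⟩ := key ((2 - ‖e - f‖) / 4) ((4 : ℝ)⁻¹ • (e + f))
  have hn : ‖(4 : ℝ)⁻¹ • (e + f)‖ = ‖e + f‖ / 4 := by
    rw [norm_smul]; simp; ring
  refine ⟨h, ?_, ?_⟩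
  · rw [h1, hn]; ring
  · rw [h2, hn]
    constructor <;> intro <;> linarith

lemma one_sub_eff (f : EuclideanSpace ℝ (Fin 3)) :
    1 - (2 : ℂ)⁻¹ • (1 + dotSigma f) = (2 : ℂ)⁻¹ • (1 + dotSigma (-f)) := by
  rw [dotSigma_neg]; module

/-- For qubit effects E = ½(1 + e·σ) and F = ½(1 + f·σ), each of the four generalized infima
E ⊓ F, E ⊓ (1-F), (1-E) ⊓ F, (1-E) ⊓ (1-F) is Hermitian with smallest eigenvalue
¼(2 - ‖e - f‖ - ‖e + f‖); in particular all four are positive iff ‖e + f‖ + ‖e - f‖ ≤ 2. -/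
theorem qubit_ginf_smallest_eigenvalue (e f : EuclideanSpace ℝ (Fin 3))
    (he : ‖e‖ ≤ 1) (hf : ‖f‖ ≤ 1) :
    (∃ h : (matGinf ((2 : ℂ)⁻¹ • (1 + dotSigma e)) ((2 : ℂ)⁻¹ • (1 + dotSigma f))).IsHermitian,
      ⨅ i, h.eigenvalues i = (2 - ‖e - f‖ - ‖e + f‖) / 4) ∧
    (∃ h : (matGinf ((2 : ℂ)⁻¹ • (1 + dotSigma e))
        (1 - (2 : ℂ)⁻¹ • (1 + dotSigma f))).IsHermitian,
      ⨅ i, h.eigenvalues i = (2 - ‖e - f‖ - ‖e + f‖) / 4) ∧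
    (∃ h : (matGinf (1 - (2 : ℂ)⁻¹ • (1 + dotSigma e))
        ((2 : ℂ)⁻¹ • (1 + dotSigma f))).IsHermitian,
      ⨅ i, h.eigenvalues i = (2 - ‖e - f‖ - ‖e + f‖) / 4) ∧
    (∃ h : (matGinf (1 - (2 : ℂ)⁻¹ • (1 + dotSigma e))
        (1 - (2 : ℂ)⁻¹ • (1 + dotSigma f))).IsHermitian,
      ⨅ i, h.eigenvalues i = (2 - ‖e - f‖ - ‖e + f‖) / 4) ∧
    (((matGinf ((2 : ℂ)⁻¹ • (1 + dotSigma e)) ((2 : ℂ)⁻¹ • (1 + dotSigma f))).PosSemidef ∧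
      (matGinf ((2 : ℂ)⁻¹ • (1 + dotSigma e)) (1 - (2 : ℂ)⁻¹ • (1 + dotSigma f))).PosSemidef ∧
      (matGinf (1 - (2 : ℂ)⁻¹ • (1 + dotSigma e)) ((2 : ℂ)⁻¹ • (1 + dotSigma f))).PosSemidef ∧
      (matGinf (1 - (2 : ℂ)⁻¹ • (1 + dotSigma e))
        (1 - (2 : ℂ)⁻¹ • (1 + dotSigma f))).PosSemidef) ↔
      ‖e + f‖ + ‖e - f‖ ≤ 2) := by
  have n1 : ‖e - -f‖ = ‖e + f‖ := by rw [sub_neg_eq_add]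
  have n2 : ‖e + -f‖ = ‖e - f‖ := by rw [← sub_eq_add_neg]
  have n3 : ‖-e - f‖ = ‖e + f‖ := by rw [show -e - f = -(e + f) by abel, norm_neg]
  have n4 : ‖-e + f‖ = ‖e - f‖ := by rw [show -e + f = -(e - f) by abel, norm_neg]
  have n5 : ‖-e - -f‖ = ‖e - f‖ := by rw [show -e - -f = -(e - f) by abel, norm_neg]
  have n6 : ‖-e + -f‖ = ‖e + f‖ := by rw [show -e + -f = -(e + f) by abel, norm_neg]
  obtain ⟨h1, he1, hp1⟩ := master e f
  obtain ⟨h2, he2, hp2⟩ := master e (-f)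
  obtain ⟨h3, he3, hp3⟩ := master (-e) f
  obtain ⟨h4, he4, hp4⟩ := master (-e) (-f)
  rw [n1, n2] at he2 hp2
  rw [n3, n4] at he3 hp3
  rw [n5, n6] at he4 hp4
  rw [one_sub_eff e, one_sub_eff f]
  refine ⟨⟨h1, he1⟩, ⟨h2, he2.trans (by ring)⟩, ⟨h3, he3.trans (by ring)⟩,
    ⟨h4, he4.trans (by ring)⟩, ?_⟩
  constructor
  · rintro ⟨p1, _, _, _⟩
    exact hp1.mp p1
  · intro hle
    refine ⟨hp1.mpr hle, hp2.mpr (by linarith), hp3.mpr (by linarith), hp4.mpr (by linarith)⟩
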